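/- arXiv:2304.13990 — 2 statements merged into one kernel-verified Lean document; each statement's English description precedes it below -/
import Mathlib

section
/- Let q > 3 be prime, G = D_{2q} ≤ S_q, and ψ = ψ_h any degree-2 irreducible character (0 < h < q/2). Then ‖f^ψ_{i1}‖² = 2/q < 1/2, yet V^ψ(G) has no O-basis; hence the norm condition √2/2 < ‖f^λ_{ij}‖ < 1 is sufficient but not necessary for non-existence of an O-basis. -/
open scoped Classical InnerProductSpace ComplexConjugate

noncomputable section

/-- The Cartesian product `×^m V` with the inner product `⟨z,w⟩ = Σ ⟨z_i, w_i⟩`. -/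
abbrev CartPow (V : Type*) [NormedAddCommGroup V] [InnerProductSpace ℂ V] (m : ℕ) :=
  PiLp 2 (fun _ : Fin m => V)

/-- The Cartesian permutation operator `Q(τ)(u₁,…,u_m) = (u_{τ⁻¹(1)},…,u_{τ⁻¹(m)})`. -/
def CartQ (V : Type*) [NormedAddCommGroup V] [InnerProductSpace ℂ V] (m : ℕ)
    (τ : Equiv.Perm (Fin m)) : CartPow V m →ₗ[ℂ] CartPow V m where
  toFun u := WithLp.toLp 2 (fun i => u (τ⁻¹ i))
  map_add' _ _ := rfl
  map_smul' _ _ := rfl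

/-- The Cartesian symmetrizer `C_χ = (χ(1)/|G|) Σ_{τ∈G} χ(τ) Q(τ)`. -/
def cartSym (V : Type*) [NormedAddCommGroup V] [InnerProductSpace ℂ V] (m : ℕ)
    (G : Subgroup (Equiv.Perm (Fin m))) (χ : ↥G → ℂ) :
    CartPow V m →ₗ[ℂ] CartPow V m :=
  (χ 1 / (Nat.card G : ℂ)) • ∑ τ : G, χ τ • CartQ V m (τ : Equiv.Perm (Fin m))

/-- `χ : H → ℂ` is the character of some irreducible (finite-dimensional, complex)
representation of `H`. -/
def IsIrredChar {H : Type} [Group H] (χ : H → ℂ) : Prop :=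
  ∃ W : FDRep ℂ H, CategoryTheory.Simple W ∧ χ = W.character

/-- The standard vectors `f_{ij} = (δ_{1j} f_i, …, δ_{mj} f_i)` in `×^m V`. -/
def stdVec {V : Type*} [NormedAddCommGroup V] [InnerProductSpace ℂ V] {n : ℕ}
    (f : Fin n → V) (m : ℕ) (i : Fin n) (j : Fin m) : CartPow V m :=
  WithLp.toLp 2 (fun l => if l = j then f i else 0)

/-- `[χ, 1_{G_j}] = (1/|G_j|) Σ_{g ∈ G_j} χ(g)`. -/
def charInnerTriv {m : ℕ} (G : Subgroup (Equiv.Perm (Fin m))) (χ : ↥G → ℂ)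
    (j : Fin m) : ℂ :=
  (Nat.card (MulAction.stabilizer G j) : ℂ)⁻¹ * ∑ g : MulAction.stabilizer G j, χ (g : ↥G)

/-- `V^χ(G)` has an orthogonal basis consisting of standard χ-symmetrized vectors. -/
def HasOBasis (V : Type*) [NormedAddCommGroup V] [InnerProductSpace ℂ V] {n m : ℕ}
    (f : Fin n → V) (G : Subgroup (Equiv.Perm (Fin m))) (χ : ↥G → ℂ) : Prop :=
  ∃ (k : ℕ) (b : Module.Basis (Fin k) ℂ (LinearMap.range (cartSym V m G χ))),
    (∀ p q : Fin k, p ≠ q → ⟪(b p : CartPow V m), (b q : CartPow V m)⟫_ℂ = 0) ∧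
    ∀ p, ∃ (r : Fin n) (j : Fin m), (b p : CartPow V m) = cartSym V m G χ (stdVec f m r j)

/-- The Ramanujan sum `c_n(q)`. -/
def ramanujanSum (n q : ℕ) : ℂ :=
  ∑ s ∈ (Finset.range n).filter (fun s => Nat.gcd s n = 1),
    Complex.exp (2 * Real.pi * Complex.I * q * s / n)

end

/-- The dihedral group `D_{2m} ≤ S_m`, generated by the `m`-cycle `r` and the
reflection `s = (x ↦ -x)` fixing the first point. -/
def dihedralG (m : ℕ) [NeZero m] : Subgroup (Equiv.Perm (Fin m)) :=
  Subgroup.closure {finRotate m, (Equiv.neg (Fin m) : Equiv.Perm (Fin m))}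

/-- The reflection `s` as an element of `D_{2m}`. -/
def sElt (m : ℕ) [NeZero m] : ↥(dihedralG m) :=
  ⟨(Equiv.neg (Fin m) : Equiv.Perm (Fin m)), Subgroup.subset_closure (by simp)⟩

set_option linter.unusedSectionVars false

open Fin.CommRing

section GrpAux
open Equiv
variable (q : ℕ) [NeZero q]

lemma finRotate_pow_apply (k : ℕ) (x : Fin q) : ((finRotate q)^k) x = x + k := by
  obtain ⟨m, rfl⟩ := Nat.exists_eq_succ_of_ne_zero (NeZero.ne q)
  induction k with
  | zero => simp
  | succ k ih =>
    rw [pow_succ', Equiv.Perm.mul_apply, finRotate_succ_apply, ih]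
    push_cast; ring

lemma neg_rot_apply (k : ℕ) (x : Fin q) :
    ((Equiv.neg (Fin q) : Equiv.Perm (Fin q)) * (finRotate q)^k) x = -(x + k) := by
  rw [Equiv.Perm.mul_apply, finRotate_pow_apply]; rfl

/-- The auxiliary subgroup of affine-form permutations. -/
def affSub : Subgroup (Equiv.Perm (Fin q)) where
  carrier := {σ | (∃ c : Fin q, ∀ x, σ x = x + c) ∨ (∃ c : Fin q, ∀ x, σ x = -x + c)}
  one_mem' := Or.inl ⟨0, fun x => by simp⟩
  mul_mem' := by
    rintro σ τ (⟨a, ha⟩ | ⟨a, ha⟩) (⟨b, hb⟩ | ⟨b, hb⟩)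
    · exact Or.inl ⟨b + a, fun x => by simp [Equiv.Perm.mul_apply, ha, hb, add_assoc]⟩
    · exact Or.inr ⟨b + a, fun x => by rw [Equiv.Perm.mul_apply, hb, ha]; ring⟩
    · exact Or.inr ⟨a - b, fun x => by rw [Equiv.Perm.mul_apply, hb, ha]; ring⟩
    · exact Or.inl ⟨a - b, fun x => by rw [Equiv.Perm.mul_apply, hb, ha]; ring⟩
  inv_mem' := by
    rintro σ (⟨a, ha⟩ | ⟨a, ha⟩)
    · refine Or.inl ⟨-a, fun x => σ.injective ?_⟩
      rw [Equiv.Perm.inv_def, Equiv.apply_symm_apply, ha]; ring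
    · refine Or.inr ⟨a, fun x => σ.injective ?_⟩
      rw [Equiv.Perm.inv_def, Equiv.apply_symm_apply, ha]; ring

lemma mem_affSub_of_mem (g : Equiv.Perm (Fin q)) (hg : g ∈ dihedralG q) :
    g ∈ affSub q := by
  refine Subgroup.closure_le (affSub q) |>.2 ?_ hg
  rintro σ (rfl | rfl)
  · refine Or.inl ⟨1, fun x => ?_⟩
    have h := finRotate_pow_apply q 1 x
    rw [pow_one] at h
    simp [h]
  · exact Or.inr ⟨0, fun x => by simp⟩

lemma rot_mem (k : ℕ) : (finRotate q)^k ∈ dihedralG q :=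
  pow_mem (Subgroup.subset_closure (by simp)) k

lemma neg_mem : (Equiv.neg (Fin q) : Equiv.Perm (Fin q)) ∈ dihedralG q :=
  Subgroup.subset_closure (by simp)

lemma neg_rot_mem (k : ℕ) :
    (Equiv.neg (Fin q) : Equiv.Perm (Fin q)) * (finRotate q)^k ∈ dihedralG q :=
  mul_mem (neg_mem q) (rot_mem q k)

lemma classify (g : ↥(dihedralG q)) :
    ∃ c : Fin q, (g : Equiv.Perm (Fin q)) = (finRotate q)^(c.val) ∨
      (g : Equiv.Perm (Fin q)) = (Equiv.neg (Fin q) : Equiv.Perm (Fin q)) * (finRotate q)^(c.val) := by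
  rcases mem_affSub_of_mem q g g.2 with ⟨c, hc⟩ | ⟨c, hc⟩
  · refine ⟨c, Or.inl (Equiv.ext fun x => ?_)⟩
    rw [hc, finRotate_pow_apply, Fin.cast_val_eq_self]
  · refine ⟨-c, Or.inr (Equiv.ext fun x => ?_)⟩
    rw [hc, neg_rot_apply, Fin.cast_val_eq_self]; ring

/-- Enumeration of the dihedral group. -/
def dihEnum : Bool × Fin q → ↥(dihedralG q) :=
  fun p => if p.1 then ⟨_, neg_rot_mem q p.2.val⟩ else ⟨_, rot_mem q p.2.val⟩

lemma one_ne_neg_one_fin (hq : 2 < q) : (1 : Fin q) ≠ -1 := by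
  intro h
  have h2 : (1 : Fin q) + 1 = 0 := eq_neg_iff_add_eq_zero.1 h
  have h2' : ((2 : ℕ) : Fin q) = 0 := by
    rw [← h2]; norm_num
  rw [Fin.natCast_eq_zero] at h2'
  have := Nat.le_of_dvd (by norm_num) h2'
  omega

lemma dihEnum_bijective (hq : 2 < q) : Function.Bijective (dihEnum q) := by
  constructor
  · rintro ⟨b, c⟩ ⟨b', c'⟩ h
    have h' : ((dihEnum q (b, c) : Equiv.Perm (Fin q))) = (dihEnum q (b', c') : Equiv.Perm (Fin q)) := by
      rw [h]
    have h0 := congrArg (fun σ : Equiv.Perm (Fin q) => σ 0) h'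
    have h1 := congrArg (fun σ : Equiv.Perm (Fin q) => σ 1) h'
    cases b <;> cases b' <;>
      simp only [dihEnum, if_true, if_false, Bool.false_eq_true, neg_rot_apply,
        finRotate_pow_apply, Fin.cast_val_eq_self, zero_add] at h0 h1
    · simp [h0]
    · exfalso
      apply one_ne_neg_one_fin q hq
      rw [h0, neg_add] at h1
      exact add_right_cancel h1
    · exfalso
      apply one_ne_neg_one_fin q hq
      rw [← h0, neg_add] at h1
      exact (add_right_cancel h1).symm
    · simp only [neg_inj] at h0; simp [h0]
  · intro g
    rcases classify q g with ⟨c, hc | hc⟩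
    · exact ⟨(false, c), Subtype.ext hc.symm⟩
    · exact ⟨(true, c), Subtype.ext hc.symm⟩

/-- The enumeration as an equivalence. -/
noncomputable def dihEquiv (hq : 2 < q) : Bool × Fin q ≃ ↥(dihedralG q) :=
  Equiv.ofBijective _ (dihEnum_bijective q hq)

lemma card_dihedralG (hq : 2 < q) : Nat.card ↥(dihedralG q) = 2 * q := by
  rw [← Nat.card_congr (dihEquiv q hq)]
  simp [Nat.card_prod]

end GrpAux

noncomputable section
open Finset Equiv
section Trig
variable (q h : ℕ) [NeZero q]

/-- `ω = e^{2πih/q}`. -/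
def om : ℂ := Complex.exp (2 * Real.pi * Complex.I * h / q)

lemma om_ne_zero : om q h ≠ 0 := Complex.exp_ne_zero _

lemma om_pow_q (hq0 : 0 < q) : om q h ^ q = 1 := by
  rw [om, ← Complex.exp_nat_mul]
  have : (q : ℂ) * (2 * Real.pi * Complex.I * h / q) = (h : ℤ) * (2 * Real.pi * Complex.I) := by
    have hq : (q : ℂ) ≠ 0 := Nat.cast_ne_zero.2 hq0.ne'
    push_cast
    field_simp
  rw [this, Complex.exp_int_mul_two_pi_mul_I]

lemma om_zpow_q (hq0 : 0 < q) : om q h ^ (q : ℤ) = 1 := by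
  rw [zpow_natCast, om_pow_q q h hq0]

/-- Periodicity of zpowers of ω. -/
lemma om_zpow_add_q_mul (hq0 : 0 < q) (x k : ℤ) : om q h ^ (x + q * k) = om q h ^ x := by
  rw [zpow_add₀ (om_ne_zero q h), zpow_mul, om_zpow_q q h hq0, one_zpow, mul_one]

/-- Bridge: real cosines as zpowers of ω. -/
lemma cos_eq_om (m : ℤ) :
    ((Real.cos (2 * Real.pi * m * h / q) : ℝ) : ℂ)
      = (om q h ^ m + om q h ^ (-m)) / 2 := by
  rw [Complex.ofReal_cos, Complex.cos]
  rw [om, ← Complex.exp_int_mul, ← Complex.exp_int_mul]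
  congr 2
  · push_cast; ring
  · push_cast; ring

lemma geom_zero (z : ℂ) (hz1 : z ≠ 1) (hzq : z ^ q = 1) :
    ∑ l : Fin q, z ^ (l.val) = 0 := by
  rw [Fin.sum_univ_eq_sum_range (fun i => z ^ i) q, geom_sum_eq hz1, hzq, sub_self, zero_div]

lemma sum_zpow_lin (hq0 : 0 < q) (c t : ℤ) (hc : om q h ^ c ≠ 1) :
    ∑ l : Fin q, om q h ^ (c * (l.val : ℤ) + t) = 0 := by
  have key : ∀ l : Fin q, om q h ^ (c * (l.val : ℤ) + t)
      = (om q h ^ c) ^ (l.val) * om q h ^ t := by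
    intro l
    rw [zpow_add₀ (om_ne_zero q h), zpow_mul, zpow_natCast]
  rw [Finset.sum_congr rfl (fun l _ => key l), ← Finset.sum_mul]
  rw [geom_zero q _ hc (by rw [← zpow_natCast, ← zpow_mul, mul_comm, zpow_mul,
    om_zpow_q q h hq0, one_zpow]), zero_mul]

lemma om_sq_ne_one (hh1 : 0 < h) (hh2 : 2 * h < q) : om q h ^ (2 : ℤ) ≠ 1 := by
  have hq0 : 0 < q := by omega
  intro hone
  rw [om, ← Complex.exp_int_mul, Complex.exp_eq_one_iff] at hone
  obtain ⟨n, hn⟩ := hone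
  have hq : (q : ℂ) ≠ 0 := Nat.cast_ne_zero.2 hq0.ne'
  have hIm : ((2 : ℝ) * (2 * Real.pi * h / q) : ℝ) = (n : ℝ) * (2 * Real.pi) := by
    have h2 : ((2:ℤ) : ℂ) * (2 * Real.pi * Complex.I * h / q)
        = (((2 : ℝ) * (2 * Real.pi * h / q) : ℝ) : ℂ) * Complex.I := by
      push_cast; field_simp
    rw [h2] at hn
    have h3 : ((n : ℝ) * (2 * Real.pi) : ℝ) * Complex.I = (n:ℂ) * (2 * Real.pi * Complex.I) := by
      push_cast; ring
    rw [← h3] at hn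
    exact_mod_cast mul_right_cancel₀ Complex.I_ne_zero hn
  have hπ : (0:ℝ) < Real.pi := Real.pi_pos
  have hqR : (0:ℝ) < (q:ℝ) := by exact_mod_cast hq0
  have h2h : (2 * (2*h) : ℝ) = n * (2 * q) := by
    field_simp at hIm
    nlinarith [hIm]
  have hZ : (2 * (2*h) : ℤ) = n * (2 * q) := by exact_mod_cast h2h
  rcases lt_trichotomy n 0 with hn0 | hn0 | hn0
  · nlinarith [hZ]
  · rw [hn0, zero_mul] at hZ; omega
  · nlinarith [hZ]

lemma cos_nat (c : ℕ) :
    ((Real.cos (2 * Real.pi * (c : ℝ) * h / q) : ℝ) : ℂ)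
      = (om q h ^ (c : ℤ) + om q h ^ (-(c : ℤ))) / 2 := by
  have := cos_eq_om q h (c : ℤ)
  have harg : (((c : ℤ) : ℝ)) = (c : ℝ) := by push_cast; ring
  rw [harg] at this
  exact this

lemma om_pow_mod (hq0 : 0 < q) (m : ℕ) : om q h ^ m = om q h ^ (m % q) := by
  conv_lhs => rw [← Nat.div_add_mod m q]
  rw [pow_add, pow_mul, om_pow_q q h hq0, one_pow, one_mul]

lemma om_zpow_val_sub (hq0 : 0 < q) (a l : Fin q) :
    om q h ^ (((l - a).val : ℤ)) = om q h ^ ((l.val : ℤ) - (a.val : ℤ)) := by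
  have hval : ((l - a).val + a.val) % q = l.val := by
    have h1 : ((l - a) + a).val = ((l - a).val + a.val) % q := by
      rw [Fin.add_def]
    rw [← h1]; exact congrArg Fin.val (sub_add_cancel l a)
  have key : om q h ^ ((l - a).val) * om q h ^ (a.val) = om q h ^ (l.val) := by
    rw [← pow_add, om_pow_mod q h hq0 ((l - a).val + a.val), hval]
  rw [zpow_sub₀ (om_ne_zero q h), zpow_natCast, zpow_natCast, zpow_natCast,
    eq_div_iff (pow_ne_zero _ (om_ne_zero q h)), key]

lemma cos_fin (hq0 : 0 < q) (a l : Fin q) :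
    ((Real.cos (2 * Real.pi * (((l - a).val : ℕ) : ℝ) * h / q) : ℝ) : ℂ)
      = (om q h ^ ((l.val : ℤ) - a.val) + om q h ^ (-((l.val : ℤ) - a.val))) / 2 := by
  rw [cos_nat, om_zpow_val_sub q h hq0 a l, zpow_neg, zpow_neg, om_zpow_val_sub q h hq0 a l]

/-- The key orthogonality sum, complex version. -/
lemma sum_cos_mul_fin (hq0 : 0 < q) (hh1 : 0 < h) (hh2 : 2 * h < q) (a b : Fin q) :
    ∑ l : Fin q, ((Real.cos (2 * Real.pi * (((l - a).val : ℕ) : ℝ) * h / q)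
        * Real.cos (2 * Real.pi * (((l - b).val : ℕ) : ℝ) * h / q) : ℝ) : ℂ)
      = (((q : ℝ) / 2 * Real.cos (2 * Real.pi * (((a - b).val : ℕ) : ℝ) * h / q) : ℝ) : ℂ) := by
  have hω0 := om_ne_zero q h
  have h2 := om_sq_ne_one q h hh1 hh2
  have hneg2 : om q h ^ (-2 : ℤ) ≠ 1 := by
    rw [zpow_neg]
    intro hcon
    exact h2 (by rw [← inv_inv (om q h ^ (2:ℤ)), hcon, inv_one])
  have step : ∀ l : Fin q,
      ((Real.cos (2 * Real.pi * (((l - a).val : ℕ) : ℝ) * h / q)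
        * Real.cos (2 * Real.pi * (((l - b).val : ℕ) : ℝ) * h / q) : ℝ) : ℂ)
      = (om q h ^ (2 * (l.val : ℤ) + (-((a.val : ℤ) + b.val)))
          + om q h ^ ((-2) * (l.val : ℤ) + ((a.val : ℤ) + b.val))) / 4
        + (om q h ^ ((a.val : ℤ) - b.val) + om q h ^ (-((a.val : ℤ) - b.val))) / 4 := by
    intro l
    rw [Complex.ofReal_mul, cos_fin q h hq0 a l, cos_fin q h hq0 b l]
    have e1 : (2 * (l.val : ℤ) + (-((a.val : ℤ) + b.val)))
        = ((l.val : ℤ) - a.val) + ((l.val : ℤ) - b.val) := by ring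
    have e2 : ((-2) * (l.val : ℤ) + ((a.val : ℤ) + b.val))
        = (-((l.val : ℤ) - a.val)) + (-((l.val : ℤ) - b.val)) := by ring
    have e3 : ((a.val : ℤ) - b.val) = (-((l.val : ℤ) - a.val)) + ((l.val : ℤ) - b.val) := by ring
    have e4 : (-((a.val : ℤ) - b.val)) = ((l.val : ℤ) - a.val) + (-((l.val : ℤ) - b.val)) := by
      ring
    rw [e1, e2, e4, e3, zpow_add₀ hω0, zpow_add₀ hω0, zpow_add₀ hω0, zpow_add₀ hω0]
    ring
  rw [Finset.sum_congr rfl (fun l _ => step l), Finset.sum_add_distrib]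
  have s1 : ∑ l : Fin q,
      (om q h ^ (2 * (l.val : ℤ) + (-((a.val : ℤ) + b.val)))
        + om q h ^ ((-2) * (l.val : ℤ) + ((a.val : ℤ) + b.val))) / 4 = 0 := by
    rw [← Finset.sum_div, Finset.sum_add_distrib,
      sum_zpow_lin q h hq0 2 _ h2, sum_zpow_lin q h hq0 (-2) _ hneg2]
    norm_num
  rw [s1, zero_add, Finset.sum_const, Finset.card_univ, Fintype.card_fin,
    Complex.ofReal_mul, cos_fin q h hq0 b a]
  push_cast
  ring

/-- The key orthogonality sum, real version. -/
lemma sum_cos_mul (hq0 : 0 < q) (hh1 : 0 < h) (hh2 : 2 * h < q) (a b : Fin q) :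
    ∑ l : Fin q, Real.cos (2 * Real.pi * (((l - a).val : ℕ) : ℝ) * h / q)
        * Real.cos (2 * Real.pi * (((l - b).val : ℕ) : ℝ) * h / q)
      = (q : ℝ) / 2 * Real.cos (2 * Real.pi * (((a - b).val : ℕ) : ℝ) * h / q) := by
  have := sum_cos_mul_fin q h hq0 hh1 hh2 a b
  exact_mod_cast this

lemma cos_ne_zero_of_odd (hq0 : 0 < q) (hodd : Odd q) (c : ℕ) :
    Real.cos (2 * Real.pi * (c : ℝ) * h / q) ≠ 0 := by
  intro h0
  rw [Real.cos_eq_zero_iff] at h0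
  obtain ⟨k, hk⟩ := h0
  have hqR : ((q:ℝ)) ≠ 0 := Nat.cast_ne_zero.2 hq0.ne'
  have hπ := Real.pi_ne_zero
  field_simp at hk
  have h2 : Real.pi * (4 * (c:ℝ) * h) = Real.pi * ((2*(k:ℝ)+1) * q) := by congr 1; linear_combination hk
  have h3 : (4 * (c:ℝ) * h) = (2*(k:ℝ)+1) * q := mul_left_cancel₀ hπ h2
  have hZ : (4 * (c:ℤ) * h) = (2*k+1) * q := by exact_mod_cast h3
  have he : Even (4 * (c:ℤ) * h) := ⟨2*c*h, by ring⟩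
  have ho : Odd ((2*k+1) * (q:ℤ)) := by
    refine Odd.mul ⟨k, by ring⟩ ?_
    exact_mod_cast hodd
  rw [hZ] at he
  exact (Int.not_even_iff_odd.2 ho) he

lemma cos_q_sub_one (hq0 : 0 < q) :
    Real.cos (2 * Real.pi * (((q - 1 : ℕ)) : ℝ) * h / q)
      = Real.cos (2 * Real.pi * ((1:ℕ) : ℝ) * h / q) := by
  have hqR : ((q:ℝ)) ≠ 0 := Nat.cast_ne_zero.2 hq0.ne'
  have e : 2 * Real.pi * (((q - 1 : ℕ)) : ℝ) * h / q
      = ((h:ℤ) : ℝ) * (2 * Real.pi) - 2 * Real.pi * ((1:ℕ) : ℝ) * h / q := by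
    have hcast : (((q - 1 : ℕ)) : ℝ) = (q : ℝ) - 1 := by
      push_cast [Nat.cast_sub hq0]
      ring
    rw [hcast]
    push_cast
    field_simp
  rw [e, Real.cos_int_mul_two_pi_sub]

lemma cos_one_sq_lt (hq0 : 0 < q) (hh1 : 0 < h) (hh2 : 2 * h < q) :
    Real.cos (2 * Real.pi * ((1:ℕ) : ℝ) * h / q) ^ 2 < 1 := by
  set θ := 2 * Real.pi * ((1:ℕ) : ℝ) * h / q with hθ
  have hπ := Real.pi_pos
  have hqR : (0:ℝ) < (q:ℝ) := by exact_mod_cast hq0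
  have hhR : (0:ℝ) < (h:ℝ) := by exact_mod_cast hh1
  have h2hR : 2*(h:ℝ) < q := by exact_mod_cast hh2
  have hθ1 : 0 < θ := by
    rw [hθ]
    positivity
  have hθ2 : θ < Real.pi := by
    rw [hθ, div_lt_iff₀ hqR]
    push_cast
    nlinarith [mul_lt_mul_of_pos_left h2hR hπ]
  have hs := Real.sin_pos_of_pos_of_lt_pi hθ1 hθ2
  nlinarith [Real.sin_sq_add_cos_sq θ, mul_pos hs hs]
end Trig

section Sym
variable (V : Type*) [NormedAddCommGroup V] [InnerProductSpace ℂ V]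

lemma cartSym_apply (m : ℕ) (G : Subgroup (Equiv.Perm (Fin m))) (χ : ↥G → ℂ)
    (u : CartPow V m) (l : Fin m) :
    cartSym V m G χ u l
      = (χ 1 / (Nat.card G : ℂ)) • ∑ τ : G, χ τ • u ((τ : Equiv.Perm (Fin m))⁻¹ l) := by
  simp only [cartSym, LinearMap.smul_apply, LinearMap.sum_apply]
  show (χ 1 / (Nat.card ↥G : ℂ)) • (∑ x : ↥G, χ x • (CartQ V m (x : Equiv.Perm (Fin m))) u) l = _
  congr 1
  rw [WithLp.ofLp_sum, Finset.sum_apply]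
  rfl

end Sym

section Psi
variable {q : ℕ} [NeZero q] (h : ℕ) (ψ : ↥(dihedralG q) → ℂ)
variable (hψ : ∀ (g : ↥(dihedralG q)) (k : ℕ),
      ((g : Equiv.Perm (Fin q)) = (finRotate q) ^ k →
        ψ g = ((2 * Real.cos (2 * Real.pi * k * h / q) : ℝ) : ℂ)) ∧
      ((g : Equiv.Perm (Fin q)) =
          (Equiv.neg (Fin q) : Equiv.Perm (Fin q)) * (finRotate q) ^ k → ψ g = 0))

/-- r^c as an element of the dihedral subgroup. -/
def rotG (c : Fin q) : ↥(dihedralG q) := ⟨_, rot_mem q c.val⟩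

include hψ

lemma psi_one : ψ 1 = 2 := by
  have := (hψ 1 0).1 (by rw [pow_zero]; rfl)
  simpa using this

lemma psi_rotG (c : Fin q) :
    ψ (rotG c) = ((2 * Real.cos (2 * Real.pi * c.val * h / q) : ℝ) : ℂ) :=
  (hψ (rotG c) c.val).1 rfl

lemma psi_refG (c : Fin q) : ψ ⟨_, neg_rot_mem q c.val⟩ = 0 :=
  (hψ ⟨_, neg_rot_mem q c.val⟩ c.val).2 rfl

variable (V : Type*) [NormedAddCommGroup V] [InnerProductSpace ℂ V]

lemma cartSym_stdVec {n : ℕ} (hq : 2 < q) (f : Fin n → V) (i : Fin n) (j l : Fin q) :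
    cartSym V q (dihedralG q) ψ (stdVec f q i j) l
      = ((2 * Real.cos (2 * Real.pi * ((l - j : Fin q)).val * h / q) / q : ℝ) : ℂ) • f i := by
  rw [cartSym_apply, psi_one h ψ hψ, card_dihedralG q hq]
  rw [← Equiv.sum_comp (dihEquiv q hq) (fun τ => ψ τ • stdVec f q i j ((τ : Equiv.Perm (Fin q))⁻¹ l))]
  rw [Fintype.sum_prod_type, Fintype.sum_bool]
  have htrue : ∀ y : Fin q, ψ ((dihEquiv q hq) (true, y)) = 0 := fun y => psi_refG h ψ hψ y
  simp only [htrue, zero_smul, Finset.sum_const_zero, zero_add]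
  have hcond : ∀ y : Fin q, ((((finRotate q)^(y.val) : Equiv.Perm (Fin q)))⁻¹ l = j) ↔ (y = l - j) := by
    intro y
    rw [Equiv.Perm.inv_eq_iff_eq, finRotate_pow_apply, Fin.cast_val_eq_self]
    constructor
    · intro hy; rw [hy]; ring
    · intro hy; rw [hy]; ring
  have hstep : ∀ y : Fin q,
      ψ ((dihEquiv q hq) (false, y)) •
          stdVec f q i j ((((dihEquiv q hq) (false, y) : ↥(dihedralG q)) : Equiv.Perm (Fin q))⁻¹ l)
        = if y = l - j then ψ (rotG y) • f i else 0 := by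
    intro y
    show ψ (rotG y) • stdVec f q i j (((rotG y : ↥(dihedralG q)) : Equiv.Perm (Fin q))⁻¹ l) = _
    by_cases hy : y = l - j
    · rw [if_pos hy]
      have : stdVec f q i j (((finRotate q)^(y.val) : Equiv.Perm (Fin q))⁻¹ l) = f i := by
        rw [stdVec, WithLp.ofLp_toLp]; exact if_pos ((hcond y).2 hy)
      exact congrArg _ this
    · rw [if_neg hy]
      have : stdVec f q i j (((finRotate q)^(y.val) : Equiv.Perm (Fin q))⁻¹ l) = 0 := by
        rw [stdVec, WithLp.ofLp_toLp]; exact if_neg (fun hc => hy ((hcond y).1 hc))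
      rw [show ((rotG y : ↥(dihedralG q)) : Equiv.Perm (Fin q)) = (finRotate q)^(y.val) from rfl,
        this, smul_zero]
  rw [Finset.sum_congr rfl (fun y _ => hstep y), Finset.sum_ite_eq' Finset.univ (l - j)
    (fun y => ψ (rotG y) • f i), if_pos (Finset.mem_univ _)]
  rw [psi_rotG h ψ hψ, smul_smul]
  congr 1
  have hq0 : (q : ℂ) ≠ 0 := Nat.cast_ne_zero.2 (by omega)
  push_cast
  field_simp

lemma inner_sym {n : ℕ} (hq2 : 2 < q) (hh1 : 0 < h) (hh2 : 2 * h < q)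
    (f : OrthonormalBasis (Fin n) ℂ V) (r r' : Fin n) (j j' : Fin q) :
    ⟪(cartSym V q (dihedralG q) ψ (stdVec ⇑f q r j) : CartPow V q),
      cartSym V q (dihedralG q) ψ (stdVec ⇑f q r' j')⟫_ℂ
    = if r = r' then
        ((2 / (q : ℝ) * Real.cos (2 * Real.pi * (((j - j').val : ℕ) : ℝ) * h / q) : ℝ) : ℂ)
      else 0 := by
  have hq0 : 0 < q := by omega
  have hqC : ((q : ℝ)) ≠ 0 := Nat.cast_ne_zero.2 hq0.ne'
  have hite : ∀ a b : Fin n, ⟪(f a : V), (f b : V)⟫_ℂ = if a = b then 1 else 0 :=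
    orthonormal_iff_ite.mp f.orthonormal
  rw [PiLp.inner_apply]
  have hterm : ∀ l : Fin q,
      ⟪cartSym V q (dihedralG q) ψ (stdVec ⇑f q r j) l,
        cartSym V q (dihedralG q) ψ (stdVec ⇑f q r' j') l⟫_ℂ
      = ((Real.cos (2 * Real.pi * (((l - j).val : ℕ) : ℝ) * h / q)
            * Real.cos (2 * Real.pi * (((l - j').val : ℕ) : ℝ) * h / q) : ℝ) : ℂ)
          * ((4 / (q : ℝ)^2 : ℝ) : ℂ) * (if r = r' then 1 else 0) := by
    intro l
    rw [cartSym_stdVec h ψ hψ V hq2 ⇑f r j l, cartSym_stdVec h ψ hψ V hq2 ⇑f r' j' l,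
      inner_smul_left, inner_smul_right, hite r r', Complex.conj_ofReal]
    push_cast
    field_simp
    ring
  rw [Finset.sum_congr rfl (fun l _ => hterm l), ← Finset.sum_mul, ← Finset.sum_mul,
    sum_cos_mul_fin q h hq0 hh1 hh2 j j']
  by_cases hrr : r = r'
  · rw [if_pos hrr, if_pos hrr, mul_one]
    have hqC' : ((q : ℂ)) ≠ 0 := by exact_mod_cast hqC
    push_cast
    field_simp
    ring
  · rw [if_neg hrr, if_neg hrr, mul_zero]

lemma norm_sym {n : ℕ} (hq2 : 2 < q) (hh1 : 0 < h) (hh2 : 2 * h < q)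
    (f : OrthonormalBasis (Fin n) ℂ V) (i : Fin n) :
    ‖cartSym V q (dihedralG q) ψ (stdVec ⇑f q i 0)‖ ^ 2 = 2 / (q : ℝ) := by
  rw [norm_sq_eq_re_inner (𝕜 := ℂ), inner_sym h ψ hψ V hq2 hh1 hh2 f i i 0 0, if_pos rfl]
  have h00 : ((0 : Fin q) - 0) = 0 := sub_zero 0
  rw [h00]
  norm_num [Complex.ofReal_re]

end Psi
end

/-- for a prime `q > 3`, `G = D_{2q} ≤ S_q` and `ψ = ψ_h`
(`0 < h < q/2`), one has `‖f^ψ_{i1}‖² = 2/q < 1/2`, yet `V^ψ(G)` has no `O`-basis: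
the norm condition of the non-existence criterion is sufficient but not necessary. -/
theorem dihedral_prime_no_OBasis
    (V : Type*) [NormedAddCommGroup V] [InnerProductSpace ℂ V] [FiniteDimensional ℂ V]
    {n : ℕ} (q : ℕ) [NeZero q] (hq : q.Prime) (hq3 : 3 < q)
    (f : OrthonormalBasis (Fin n) ℂ V) (hn : 2 ≤ n)
    (h : ℕ) (hh1 : 0 < h) (hh2 : 2 * h < q)
    (ψ : ↥(dihedralG q) → ℂ)
    (hψ : ∀ (g : ↥(dihedralG q)) (k : ℕ),
      ((g : Equiv.Perm (Fin q)) = (finRotate q) ^ k →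
        ψ g = ((2 * Real.cos (2 * Real.pi * k * h / q) : ℝ) : ℂ)) ∧
      ((g : Equiv.Perm (Fin q)) =
          (Equiv.neg (Fin q) : Equiv.Perm (Fin q)) * (finRotate q) ^ k → ψ g = 0)) :
    (∀ i : Fin n, ‖cartSym V q (dihedralG q) ψ (stdVec ⇑f q i 0)‖ ^ 2 = 2 / (q : ℝ)) ∧
    2 / (q : ℝ) < 1 / 2 ∧
    ¬ HasOBasis V ⇑f (dihedralG q) ψ := by
  have hq0 : 0 < q := by omega
  have hq2 : 2 < q := by omega
  have hq4 : 4 < q := by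
    have h4 : q ≠ 4 := by rintro rfl; norm_num at hq
    omega
  have hodd : Odd q := hq.odd_of_ne_two (by omega)
  have hqR : (0:ℝ) < (q:ℝ) := by exact_mod_cast hq0
  refine ⟨fun i => norm_sym h ψ hψ V hq2 hh1 hh2 f i, ?_, ?_⟩
  · rw [div_lt_div_iff₀ hqR (by norm_num)]
    have : (4:ℝ) < q := by exact_mod_cast hq4
    linarith
  rintro ⟨k, b, horth, hstd⟩
  haveI : NeZero n := ⟨by omega⟩
  choose r j hb using hstd
  have hite : ∀ a b2 : Fin n, ⟪(f a : V), (f b2 : V)⟫_ℂ = if a = b2 then 1 else 0 :=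
    orthonormal_iff_ite.mp f.orthonormal
  -- k ≤ n
  have hrinj : Function.Injective r := by
    intro p p' hpp'
    by_contra hne
    have h0 := horth p p' hne
    rw [hb p, hb p', inner_sym h ψ hψ V hq2 hh1 hh2 f (r p) (r p') (j p) (j p'),
      if_pos hpp'] at h0
    have hcos := cos_ne_zero_of_odd q h hq0 hodd ((j p - j p').val)
    have h2q : (2 / (q:ℝ)) ≠ 0 := by positivity
    have hne0 : (2 / (q:ℝ) * Real.cos (2 * Real.pi * (((j p - j p').val : ℕ) : ℝ) * h / q)) ≠ 0 :=
      mul_ne_zero h2q hcos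
    exact hne0 (by exact_mod_cast h0)
  have hkn : k ≤ n := by
    have := Fintype.card_le_of_injective r hrinj
    simpa using this
  -- finrank of the range is k
  have hfd : FiniteDimensional ℂ (CartPow V q) :=
    inferInstance
  have hfr : Module.finrank ℂ ↥(LinearMap.range (cartSym V q (dihedralG q) ψ)) = k := by
    rw [Module.finrank_eq_card_basis b, Fintype.card_fin]
  -- an independent family of n+1 vectors in the range
  let g : Fin (n+1) → CartPow V q :=
    Fin.snoc (fun i : Fin n => cartSym V q (dihedralG q) ψ (stdVec ⇑f q i 0))
      (cartSym V q (dihedralG q) ψ (stdVec ⇑f q 0 1))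
  have hgmem : ∀ p, g p ∈ LinearMap.range (cartSym V q (dihedralG q) ψ) := by
    intro p
    refine Fin.lastCases ?_ ?_ p
    · simp only [g, Fin.snoc_last]; exact LinearMap.mem_range_self _ _
    · intro i; simp only [g, Fin.snoc_castSucc]; exact LinearMap.mem_range_self _ _
  have hA : ∀ (i : Fin n) (l : Fin q), g (Fin.castSucc i) l
      = ((2 * Real.cos (2 * Real.pi * (((l - 0).val : ℕ) : ℝ) * h / q) / q : ℝ) : ℂ) • f i := by
    intro i l
    simp only [g, Fin.snoc_castSucc]
    exact cartSym_stdVec h ψ hψ V hq2 ⇑f i 0 l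
  have hB : ∀ l : Fin q, g (Fin.last n) l
      = ((2 * Real.cos (2 * Real.pi * (((l - 1).val : ℕ) : ℝ) * h / q) / q : ℝ) : ℂ) • f 0 := by
    intro l
    simp only [g, Fin.snoc_last]
    exact cartSym_stdVec h ψ hψ V hq2 ⇑f 0 1 l
  -- small value computations
  have hv1 : ((1:Fin q)).val = 1 := by
    rw [Fin.val_one']
    exact Nat.mod_eq_of_lt (by omega)
  have e01 : (((0:Fin q) - 1).val) = q - 1 := by
    rw [Fin.sub_def]
    simp only [hv1, Fin.val_zero, add_zero]
    exact Nat.mod_eq_of_lt (by omega)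
  set γ : ℝ := Real.cos (2 * Real.pi * ((1:ℕ) : ℝ) * h / q) with hγ
  have hγ2 : γ^2 < 1 := cos_one_sq_lt q h hq0 hh1 hh2
  have hγne : ((γ:ℂ)^2 - 1) ≠ 0 := by
    intro hcon
    have : (γ:ℝ)^2 = 1 := by
      have := sub_eq_zero.mp hcon
      exact_mod_cast this
    linarith
  have hgind : LinearIndependent ℂ g := by
    rw [Fintype.linearIndependent_iff]
    intro c hc
    have hcomp : ∀ l : Fin q, ∑ p, c p • g p l = 0 := by
      intro l
      have h1 : (∑ p, c p • g p) l = ∑ p, (c p • g p) l := by rw [WithLp.ofLp_sum, Finset.sum_apply]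
      calc ∑ p, c p • g p l = (∑ p, c p • g p) l := by rw [h1]; rfl
        _ = 0 := by rw [hc]; rfl
    have key : ∀ (l : Fin q) (i0 : Fin n),
        c (Fin.castSucc i0) * ((2 * Real.cos (2 * Real.pi * (((l - 0).val : ℕ) : ℝ) * h / q) / q : ℝ) : ℂ)
          + (if i0 = 0 then 1 else 0)
            * (c (Fin.last n) * ((2 * Real.cos (2 * Real.pi * (((l - 1).val : ℕ) : ℝ) * h / q) / q : ℝ) : ℂ)) = 0 := by
      intro l i0
      have h2 : ∑ p : Fin (n+1), c p * ⟪(f i0 : V), g p l⟫_ℂ = 0 := by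
        have e : ∑ p : Fin (n+1), c p * ⟪(f i0 : V), g p l⟫_ℂ
            = ⟪(f i0 : V), ∑ p : Fin (n+1), c p • g p l⟫_ℂ := by
          rw [inner_sum]
          exact Finset.sum_congr rfl (fun p _ => (inner_smul_right _ _ _).symm)
        rw [e, hcomp l, inner_zero_right]
      rw [Fin.sum_univ_castSucc] at h2
      have eA : ∀ i : Fin n, c (Fin.castSucc i) * ⟪(f i0 : V), g (Fin.castSucc i) l⟫_ℂ
          = if i0 = i then c (Fin.castSucc i)
              * ((2 * Real.cos (2 * Real.pi * (((l - 0).val : ℕ) : ℝ) * h / q) / q : ℝ) : ℂ) else 0 := by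
        intro i
        rw [hA i l, inner_smul_right, hite i0 i]
        by_cases hii : i0 = i
        · rw [if_pos hii, if_pos hii]; ring
        · rw [if_neg hii, if_neg hii]; ring
      rw [Finset.sum_congr rfl (fun i _ => eA i), Finset.sum_ite_eq, if_pos (Finset.mem_univ i0),
        hB l, inner_smul_right, hite i0 0] at h2
      by_cases h00 : i0 = 0
      · rw [if_pos h00] at h2 ⊢; linear_combination h2
      · rw [if_neg h00] at h2 ⊢; linear_combination h2
    have hcos0 : Real.cos (2 * Real.pi * ((0:ℕ) : ℝ) * h / q) = 1 := by norm_num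
    have hqC : ((q:ℂ)) ≠ 0 := by exact_mod_cast hqR.ne'
    have hcoef : ((2 * 1 / (q:ℝ) : ℝ) : ℂ) ≠ 0 := by
      have hp : (0:ℝ) < 2 * 1 / (q:ℝ) := by positivity
      exact Complex.ofReal_ne_zero.mpr hp.ne'
    have hclast : c (Fin.last n) = 0 := by
      have k00 := key 0 0
      have k10 := key 1 0
      rw [if_pos rfl, sub_zero, e01, cos_q_sub_one q h hq0, Fin.val_zero, hcos0] at k00
      rw [if_pos rfl, sub_zero, hv1, sub_self, Fin.val_zero, hcos0] at k10
      rw [← hγ] at k00 k10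
      have hmul : c (Fin.last n) * (((γ:ℂ)^2 - 1) * (2 / (q:ℂ))) = 0 := by
        push_cast at k00 k10 ⊢
        linear_combination (γ:ℂ) * k00 - k10
      rcases mul_eq_zero.mp hmul with hcl | hcl
      · exact hcl
      · refine absurd hcl (mul_ne_zero hγne ?_)
        intro hcon
        rw [div_eq_zero_iff] at hcon
        rcases hcon with hcon | hcon
        · norm_num at hcon
        · exact hqC hcon
    have hczero : c (Fin.castSucc (0 : Fin n)) = 0 := by
      have k00 := key 0 0
      rw [if_pos rfl, sub_zero, Fin.val_zero, hcos0, hclast] at k00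
      have hmm : c (Fin.castSucc (0 : Fin n)) * ((2 * 1 / (q:ℝ) : ℝ) : ℂ) = 0 := by
        push_cast at k00 ⊢
        linear_combination k00
      rcases mul_eq_zero.mp hmm with hc0 | hc0
      · exact hc0
      · exact absurd hc0 hcoef
    intro p
    refine Fin.lastCases hclast (fun i => ?_) p
    by_cases hi0 : i = (0 : Fin n)
    · rw [hi0]; exact hczero
    · have ki := key 0 i
      rw [if_neg hi0, sub_zero, Fin.val_zero, hcos0, zero_mul, add_zero] at ki
      have hmm : c (Fin.castSucc i) * ((2 * 1 / (q:ℝ) : ℝ) : ℂ) = 0 := by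
        push_cast at ki ⊢
        linear_combination ki
      rcases mul_eq_zero.mp hmm with hc0 | hc0
      · exact hc0
      · exact absurd hc0 hcoef
  have hle : n + 1 ≤ Module.finrank ℂ ↥(LinearMap.range (cartSym V q (dihedralG q) ψ)) := by
    let g' : Fin (n+1) → ↥(LinearMap.range (cartSym V q (dihedralG q) ψ)) :=
      fun p => ⟨g p, hgmem p⟩
    have hind' : LinearIndependent ℂ g' :=
      LinearIndependent.of_comp (LinearMap.range (cartSym V q (dihedralG q) ψ)).subtype hgind
    have := hind'.fintype_card_le_finrank
    simpa using this
  omega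
end

section
/- For G = D_8 ≤ S_4 and its unique non-linear irreducible character ψ (ψ(r^k) = 2cos(kπ/2), ψ(sr^k) = 0), one has ‖f^ψ_{ij}‖ = √2/2 for all valid i, j, and V^ψ(G) has an O-basis; hence √2/2 is the optimal lower bound in the non-existence criterion. -/
open scoped Classical InnerProductSpace ComplexConjugate

namespace D8aux
def r : Equiv.Perm (Fin 4) := finRotate 4
def ss : Equiv.Perm (Fin 4) := (Equiv.neg (Fin 4) : Equiv.Perm (Fin 4))
def L : Finset (Equiv.Perm (Fin 4)) := {1, r, r^2, r^3, ss, ss*r, ss*r^2, ss*r^3}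

lemma hr : r ∈ dihedralG 4 := Subgroup.subset_closure (by left; rfl)
lemma hs : ss ∈ dihedralG 4 := Subgroup.subset_closure (by right; rfl)

lemma L_subset : ∀ x ∈ L, x ∈ dihedralG 4 := by
  intro x hx
  simp only [L, Finset.mem_insert, Finset.mem_singleton] at hx
  rcases hx with h|h|h|h|h|h|h|h <;> subst h
  · exact one_mem _
  · exact hr
  · exact pow_mem hr 2
  · exact pow_mem hr 3
  · exact hs
  · exact mul_mem hs hr
  · exact mul_mem hs (pow_mem hr 2)
  · exact mul_mem hs (pow_mem hr 3)

lemma mem_L {x : Equiv.Perm (Fin 4)} (hx : x ∈ dihedralG 4) : x ∈ L := by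
  induction hx using Subgroup.closure_induction with
  | mem x hx => rcases hx with h|h <;> subst h
                · exact by decide
                · exact by decide
  | one => decide
  | mul x y hx hy px py => exact (by decide : ∀ p ∈ L, ∀ q ∈ L, p * q ∈ L) x px y py
  | inv x hx px => exact (by decide : ∀ p ∈ L, p⁻¹ ∈ L) x px

lemma card_G : Nat.card ↥(dihedralG 4) = 8 := by
  have e : {x // x ∈ dihedralG 4} ≃ {x // x ∈ L} :=
    Equiv.subtypeEquivRight (fun x => ⟨mem_L, L_subset x⟩)
  rw [Nat.card_congr e, Nat.card_eq_fintype_card, Fintype.card_coe]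
  decide

variable (ψ : ↥(dihedralG 4) → ℂ)
def Hpsi : Prop := ∀ (g : ↥(dihedralG 4)) (k : ℕ),
      ((g : Equiv.Perm (Fin 4)) = (finRotate 4) ^ k →
        ψ g = ((2 * Real.cos (k * Real.pi / 2) : ℝ) : ℂ)) ∧
      ((g : Equiv.Perm (Fin 4)) =
          (Equiv.neg (Fin 4) : Equiv.Perm (Fin 4)) * (finRotate 4) ^ k → ψ g = 0)

def g2 : ↥(dihedralG 4) := ⟨r^2, pow_mem hr 2⟩

variable (hψ : Hpsi ψ)
include hψ

lemma psi_one : ψ 1 = 2 := by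
  have := (hψ 1 0).1 (by simp [r])
  simpa using this

lemma psi_g2 : ψ g2 = -2 := by
  have := (hψ g2 2).1 rfl
  rw [this]
  have h2 : ((2:ℕ):ℝ) * Real.pi / 2 = Real.pi := by push_cast; ring
  rw [h2, Real.cos_pi]; norm_num

lemma psi_r : ψ ⟨r, hr⟩ = 0 := by
  have := (hψ ⟨r, hr⟩ 1).1 (by simp [r])
  rw [this]
  have h1 : ((1:ℕ):ℝ) * Real.pi / 2 = Real.pi / 2 := by push_cast; ring
  rw [h1, Real.cos_pi_div_two]; norm_num

lemma psi_r3 : ψ ⟨r^3, pow_mem hr 3⟩ = 0 := by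
  have := (hψ ⟨r^3, pow_mem hr 3⟩ 3).1 rfl
  rw [this]
  have h3 : ((3:ℕ):ℝ) * Real.pi / 2 = Real.pi / 2 + Real.pi := by push_cast; ring
  rw [h3, Real.cos_add_pi, Real.cos_pi_div_two]; norm_num

lemma psi_zero (τ : ↥(dihedralG 4)) (h1 : τ ≠ 1) (h2 : τ ≠ g2) : ψ τ = 0 := by
  have hm := mem_L τ.2
  simp only [L, Finset.mem_insert, Finset.mem_singleton] at hm
  rcases hm with h|h|h|h|h|h|h|h
  · exact absurd (Subtype.ext h) h1
  · rw [show τ = ⟨r, hr⟩ from Subtype.ext h]; exact psi_r ψ hψ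
  · exact absurd (Subtype.ext h) h2
  · rw [show τ = ⟨r^3, pow_mem hr 3⟩ from Subtype.ext h]; exact psi_r3 ψ hψ
  · exact (hψ τ 0).2 (by rw [h, pow_zero, mul_one]; rfl)
  · exact (hψ τ 1).2 (by rw [h, pow_one]; rfl)
  · exact (hψ τ 2).2 h
  · exact (hψ τ 3).2 h

variable (V : Type*) [NormedAddCommGroup V] [InnerProductSpace ℂ V]

omit hψ in
lemma one_ne_g2 : (1 : ↥(dihedralG 4)) ≠ g2 := by
  intro h
  exact absurd (congrArg Subtype.val h) (by decide)

lemma sum_eq : ∑ τ : ↥(dihedralG 4), ψ τ • CartQ V 4 (τ : Equiv.Perm (Fin 4))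
    = (2:ℂ) • CartQ V 4 1 + (-2:ℂ) • CartQ V 4 (r^2) := by
  rw [← Finset.sum_subset (Finset.subset_univ ({1, g2} : Finset ↥(dihedralG 4)))
    (fun x _ hx => by
      simp only [Finset.mem_insert, Finset.mem_singleton, not_or] at hx
      rw [psi_zero ψ hψ x hx.1 hx.2, zero_smul])]
  rw [Finset.sum_pair one_ne_g2]
  rw [psi_one ψ hψ, psi_g2 ψ hψ]
  rfl

lemma cartSym_apply (u : CartPow V 4) (l : Fin 4) :
    cartSym V 4 (dihedralG 4) ψ u l = (2:ℂ)⁻¹ • (u l - u (l + 2)) := by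
  rw [cartSym, sum_eq ψ hψ, psi_one ψ hψ, card_G]
  have hQ1 : (CartQ V 4 1) u l = u l := by
    show u ((1 : Equiv.Perm (Fin 4))⁻¹ l) = u l
    rw [inv_one]; rfl
  have hQ2 : (CartQ V 4 (r^2)) u l = u (l + 2) := by
    show u ((r^2)⁻¹ l) = u (l + 2)
    exact congrArg (fun x => u x) ((by decide : ∀ l : Fin 4, (r^2)⁻¹ l = l + 2) l)
  show ((2:ℂ) / 8) • (((2:ℂ) • CartQ V 4 1 + (-2:ℂ) • CartQ V 4 (r^2)) u l) = _
  show ((2:ℂ) / 8) • ((2:ℂ) • (CartQ V 4 1 u l) + (-2:ℂ) • (CartQ V 4 (r^2) u l)) = _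
  rw [hQ1, hQ2, smul_add, smul_smul, smul_smul, smul_sub, sub_eq_add_neg, ← neg_smul]
  norm_num


variable {n : ℕ} (f : OrthonormalBasis (Fin n) ℂ V)

lemma sym_std (i : Fin n) (j l : Fin 4) :
    cartSym V 4 (dihedralG 4) ψ (stdVec ⇑f 4 i j) l =
      if l = j then (2:ℂ)⁻¹ • f i else if l = j + 2 then -((2:ℂ)⁻¹ • f i) else 0 := by
  rw [cartSym_apply ψ hψ]
  simp only [stdVec]
  by_cases h1 : l = j
  · subst h1
    rw [if_pos rfl, if_pos rfl, if_neg ((by decide : ∀ l : Fin 4, l + 2 ≠ l) l), sub_zero]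
  · by_cases h2 : l = j + 2
    · subst h2
      rw [if_neg h1, if_neg ((by decide : ∀ j : Fin 4, ¬ (j + 2 = j)) j),
        if_pos ((by decide : ∀ j : Fin 4, j + 2 + 2 = j) j), if_pos rfl, zero_sub, smul_neg]
    · rw [if_neg h1, if_neg h1,
        if_neg ((by decide : ∀ l j : Fin 4, l ≠ j + 2 → l + 2 ≠ j) l j h2), if_neg h2,
        sub_zero, smul_zero]

lemma norm_sym (i : Fin n) (j : Fin 4) :
    ‖cartSym V 4 (dihedralG 4) ψ (stdVec ⇑f 4 i j)‖ = Real.sqrt 2 / 2 := by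
  rw [PiLp.norm_eq_of_L2]
  have hf : ‖f i‖ = 1 := f.orthonormal.1 i
  have hhalf : ‖(2:ℂ)⁻¹ • f i‖ = 1/2 := by
    rw [norm_smul, hf]; norm_num
  have hpt : ∀ l : Fin 4, ‖cartSym V 4 (dihedralG 4) ψ (stdVec ⇑f 4 i j) l‖^2
      = (if l = j then (1:ℝ)/4 else 0) + (if l = j + 2 then (1:ℝ)/4 else 0) := by
    intro l
    rw [sym_std ψ hψ V f]
    by_cases h1 : l = j
    · subst h1
      rw [if_pos rfl, if_pos rfl, if_neg ((by decide : ∀ l : Fin 4, l ≠ l + 2) l), hhalf]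
      norm_num
    · by_cases h2 : l = j + 2
      · rw [if_neg h1, if_pos h2, if_neg h1, if_pos h2, norm_neg, hhalf]; norm_num
      · rw [if_neg h1, if_neg h2, if_neg h1, if_neg h2, norm_zero]; norm_num
  rw [Finset.sum_congr rfl (fun l _ => hpt l), Finset.sum_add_distrib,
    Finset.sum_ite_eq' Finset.univ j (fun _ => (1:ℝ)/4),
    Finset.sum_ite_eq' Finset.univ (j+2) (fun _ => (1:ℝ)/4)]
  simp only [Finset.mem_univ, if_pos]
  rw [show (1/4 + 1/4 : ℝ) = (Real.sqrt 2 / 2)^2 by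
    rw [div_pow, Real.sq_sqrt (by norm_num : (0:ℝ) ≤ 2)]; norm_num]
  exact Real.sqrt_sq (by positivity)

lemma inner_sym (i i' : Fin n) (j j' : Fin 4) (hj : j = 0 ∨ j = 1) (hj' : j' = 0 ∨ j' = 1)
    (hne : i ≠ i' ∨ j ≠ j') :
    ⟪cartSym V 4 (dihedralG 4) ψ (stdVec ⇑f 4 i j),
      cartSym V 4 (dihedralG 4) ψ (stdVec ⇑f 4 i' j')⟫_ℂ = 0 := by
  rw [PiLp.inner_apply]
  by_cases hjj : j = j'
  · subst hjj
    have hi : i ≠ i' := by tauto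
    have hf : ⟪f i, f i'⟫_ℂ = (0:ℂ) := f.orthonormal.2 hi
    have hpt : ∀ l : Fin 4, ⟪cartSym V 4 (dihedralG 4) ψ (stdVec ⇑f 4 i j) l,
        cartSym V 4 (dihedralG 4) ψ (stdVec ⇑f 4 i' j) l⟫_ℂ = 0 := by
      intro l
      rw [sym_std ψ hψ V f, sym_std ψ hψ V f]
      split_ifs <;>
        simp [inner_smul_left, inner_smul_right, hf]
    simp [hpt]
  · have hpt : ∀ l : Fin 4, ⟪cartSym V 4 (dihedralG 4) ψ (stdVec ⇑f 4 i j) l,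
        cartSym V 4 (dihedralG 4) ψ (stdVec ⇑f 4 i' j') l⟫_ℂ = 0 := by
      intro l
      rw [sym_std ψ hψ V f, sym_std ψ hψ V f]
      rcases hj with rfl | rfl <;> rcases hj' with rfl | rfl <;>
        first
          | exact absurd rfl hjj
          | (fin_cases l <;> simp)
    simp [hpt]

lemma sym_std_neg (i : Fin n) (j : Fin 4) :
    cartSym V 4 (dihedralG 4) ψ (stdVec ⇑f 4 i (j + 2)) =
      -(cartSym V 4 (dihedralG 4) ψ (stdVec ⇑f 4 i j)) := by
  ext l
  show _ = -(cartSym V 4 (dihedralG 4) ψ (stdVec ⇑f 4 i j) l)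
  rw [sym_std ψ hψ V f, sym_std ψ hψ V f, ((by decide : ∀ j : Fin 4, j + 2 + 2 = j) j)]
  by_cases h1 : l = j
  · subst h1
    rw [if_neg ((by decide : ∀ l : Fin 4, l ≠ l + 2) l), if_pos rfl, if_pos rfl]
  · by_cases h2 : l = j + 2
    · rw [if_pos h2, if_neg h1, if_pos h2, neg_neg]
    · rw [if_neg h2, if_neg h1, if_neg h1, if_neg h2, neg_zero]

omit hψ in
lemma std_decomp (w : CartPow V 4) :
    w = ∑ j : Fin 4, ∑ i : Fin n, (f.repr (w j) i) • stdVec ⇑f 4 i j := by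
  ext l
  have h1 : (∑ j : Fin 4, ∑ i : Fin n, (f.repr (w j) i) • stdVec ⇑f 4 i j) l
      = ∑ j : Fin 4, ∑ i : Fin n, (f.repr (w j) i) • stdVec ⇑f 4 i j l := by
    simp only [WithLp.ofLp_sum, WithLp.ofLp_smul, Finset.sum_apply, Pi.smul_apply]
  rw [h1, Finset.sum_eq_single_of_mem l (Finset.mem_univ l)
    (fun j _ hj => Finset.sum_eq_zero fun i _ => by
      simp only [stdVec]
      rw [if_neg (fun h => hj h.symm), smul_zero])]
  simp only [stdVec, if_pos rfl]
  exact (f.sum_repr (w l)).symm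

def emb : Fin 2 → Fin 4 := Fin.castLE (by norm_num)

lemma span_range_eq :
    Submodule.span ℂ (Set.range (fun p : Fin n × Fin 2 =>
      cartSym V 4 (dihedralG 4) ψ (stdVec ⇑f 4 p.1 (emb p.2))))
    = LinearMap.range (cartSym V 4 (dihedralG 4) ψ) := by
  apply le_antisymm
  · rw [Submodule.span_le]
    rintro _ ⟨p, rfl⟩
    exact ⟨stdVec ⇑f 4 p.1 (emb p.2), rfl⟩
  · rintro u ⟨w, rfl⟩
    rw [congrArg (cartSym V 4 (dihedralG 4) ψ) (std_decomp V f w), map_sum]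
    apply Submodule.sum_mem
    intro j _
    rw [map_sum]
    apply Submodule.sum_mem
    intro i _
    rw [map_smul]
    apply Submodule.smul_mem
    fin_cases j
    · exact Submodule.subset_span ⟨(i, 0), rfl⟩
    · exact Submodule.subset_span ⟨(i, 1), rfl⟩
    · show cartSym V 4 (dihedralG 4) ψ (stdVec ⇑f 4 i ((0:Fin 4) + 2)) ∈ _
      rw [sym_std_neg ψ hψ V f]
      exact neg_mem (Submodule.subset_span ⟨(i, 0), rfl⟩)
    · show cartSym V 4 (dihedralG 4) ψ (stdVec ⇑f 4 i ((1:Fin 4) + 2)) ∈ _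
      rw [sym_std_neg ψ hψ V f]
      exact neg_mem (Submodule.subset_span ⟨(i, 1), rfl⟩)

end D8aux

/-- for `G = D₈ ≤ S₄` and its unique non-linear irreducible character
`ψ` (`ψ(r^k) = 2cos(kπ/2)`, `ψ(sr^k) = 0`), one has `‖f^ψ_{ij}‖ = √2/2` for all `i, j`,
and `V^ψ(G)` has an `O`-basis: `√2/2` is the optimal lower bound in the
non-existence criterion. -/
theorem dihedral_eight_OBasis
    (V : Type*) [NormedAddCommGroup V] [InnerProductSpace ℂ V] [FiniteDimensional ℂ V]
    {n : ℕ} (f : OrthonormalBasis (Fin n) ℂ V) (hn : 2 ≤ n)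
    (ψ : ↥(dihedralG 4) → ℂ)
    (hψ : ∀ (g : ↥(dihedralG 4)) (k : ℕ),
      ((g : Equiv.Perm (Fin 4)) = (finRotate 4) ^ k →
        ψ g = ((2 * Real.cos (k * Real.pi / 2) : ℝ) : ℂ)) ∧
      ((g : Equiv.Perm (Fin 4)) =
          (Equiv.neg (Fin 4) : Equiv.Perm (Fin 4)) * (finRotate 4) ^ k → ψ g = 0)) :
    (∀ (i : Fin n) (j : Fin 4),
      ‖cartSym V 4 (dihedralG 4) ψ (stdVec ⇑f 4 i j)‖ = Real.sqrt 2 / 2) ∧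
    HasOBasis V ⇑f (dihedralG 4) ψ := by
  have hψ' : D8aux.Hpsi ψ := hψ
  refine ⟨fun i j => D8aux.norm_sym ψ hψ' V f i j, ?_⟩
  set v : Fin n × Fin 2 → CartPow V 4 := fun p =>
    cartSym V 4 (dihedralG 4) ψ (stdVec ⇑f 4 p.1 (D8aux.emb p.2)) with hv
  have hemb01 : ∀ x : Fin 2, D8aux.emb x = 0 ∨ D8aux.emb x = 1 := by decide
  have hembinj : Function.Injective D8aux.emb := by decide
  have hnorm : ∀ p, ‖v p‖ = Real.sqrt 2 / 2 := fun p => D8aux.norm_sym ψ hψ' V f _ _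
  have hpos : (0:ℝ) < Real.sqrt 2 / 2 := by positivity
  have hz : ∀ p, v p ≠ 0 := by
    intro p h0
    have h := hnorm p
    rw [h0, norm_zero] at h
    exact absurd h.symm (ne_of_gt hpos)
  have hinner : ∀ p q : Fin n × Fin 2, p ≠ q → ⟪v p, v q⟫_ℂ = 0 := by
    intro p q hpq
    apply D8aux.inner_sym ψ hψ' V f p.1 q.1 _ _ (hemb01 p.2) (hemb01 q.2)
    by_cases h1 : p.1 = q.1
    · right
      intro h2
      exact hpq (Prod.ext h1 (hembinj h2))
    · left; exact h1
  have hli : LinearIndependent ℂ v :=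
    linearIndependent_of_ne_zero_of_inner_eq_zero hz (fun p q h => hinner p q h)
  let e : (Submodule.span ℂ (Set.range v)) ≃ₗ[ℂ]
      (LinearMap.range (cartSym V 4 (dihedralG 4) ψ)) :=
    LinearEquiv.ofEq _ _ (D8aux.span_range_eq ψ hψ' V f)
  let b : Module.Basis (Fin (n * 2)) ℂ (LinearMap.range (cartSym V 4 (dihedralG 4) ψ)) :=
    ((Module.Basis.span hli).map e).reindex finProdFinEquiv
  have hb : ∀ p : Fin (n * 2), ((b p : LinearMap.range (cartSym V 4 (dihedralG 4) ψ)) :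
      CartPow V 4) = v (finProdFinEquiv.symm p) := by
    intro p
    rw [Module.Basis.reindex_apply, Module.Basis.map_apply]
    show ((e ((Module.Basis.span hli) (finProdFinEquiv.symm p)) : _) : CartPow V 4) = _
    rw [LinearEquiv.coe_ofEq_apply, Module.Basis.span_apply]
  refine ⟨n * 2, b, ?_, ?_⟩
  · intro p q hpq
    rw [hb, hb]
    exact hinner _ _ (fun h => hpq (finProdFinEquiv.symm.injective h))
  · intro p
    exact ⟨(finProdFinEquiv.symm p).1, D8aux.emb (finProdFinEquiv.symm p).2, hb p⟩
end
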